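/- Let U_1, ..., U_{n+1} be exchangeable real-valued random variables and β ∈ (0,1). Then P(U_{n+1} ≤ U_{(⌈β(n+1)⌉)}) ≥ β, where U_{(k)} denotes the k-th smallest order statistic of (U_1, ..., U_{n+1}). -/

import Mathlib

open MeasureTheory ENNReal

/-- The `k`-th smallest value (1-indexed) of a finite family of reals. -/
noncomputable def orderStat {m : ℕ} (U : Fin m → ℝ) (k : ℕ) : ℝ :=
  (List.insertionSort (· ≤ ·) (List.ofFn U)).getD (k - 1) 0

theorem sortedCount (p : ℝ → Bool) (hp : ∀ a b : ℝ, a ≤ b → p b → p a) :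
    ∀ (s : List ℝ), s.Pairwise (· ≤ ·) → ∀ (idx : ℕ) (h : idx < s.length),
      (p (s.get ⟨idx, h⟩) ↔ idx < s.countP p) := by
  intro s
  induction s with
  | nil => intro _ idx h; simp at h
  | cons a tl ih =>
    intro hs idx h
    rw [List.pairwise_cons] at hs
    have H0 : ¬ p a → tl.countP p = 0 := by
      intro hpa
      rw [List.countP_eq_zero]
      intro b hb hpb
      exact hpa (hp a b (hs.1 b hb) hpb)
    rcases idx with _ | j
    · show p a = true ↔ _
      rw [List.countP_cons]
      constructor
      · intro hpa; simp [hpa]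
      · intro hpos
        by_contra hpa
        simp [H0 hpa, hpa] at hpos
    · show p (tl.get ⟨j, by simpa using h⟩) = true ↔ _
      rw [List.countP_cons]
      by_cases hpa : p a
      · rw [ih hs.2 j (by simpa using h)]
        simp [hpa]
      · have : ¬ p (tl.get ⟨j, by simpa using h⟩) := by
          rw [ih hs.2 j (by simpa using h), H0 hpa]; omega
        simp only [Bool.not_eq_true] at this
        simp [H0 hpa, hpa]
        exact this

theorem cardFilter {m : ℕ} (p : ℝ → Prop) [DecidablePred p] (u : Fin m → ℝ) :
    (Finset.univ.filter (fun j => p (u j))).card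
      = (List.ofFn u).countP (fun x => decide (p x)) := by
  rw [List.ofFn_eq_map, List.countP_eq_length_filter, List.filter_map, List.length_map]
  simp [Fin.univ_def, Finset.filter, Finset.card, Function.comp]
  rfl

theorem orderStat_comp {m : ℕ} (u : Fin m → ℝ) (σ : Equiv.Perm (Fin m)) (k : ℕ) :
    orderStat (u ∘ σ) k = orderStat u k := by
  unfold orderStat
  congr 1
  exact List.Perm.eq_of_pairwise' (List.pairwise_insertionSort _ _) (List.pairwise_insertionSort _ _)
    ((List.perm_insertionSort _ _).trans
      ((σ.ofFn_comp_perm u).trans (List.perm_insertionSort _ _).symm))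

theorem le_orderStat_iff {m : ℕ} (u : Fin m → ℝ) {k : ℕ} (hk1 : 1 ≤ k) (hkm : k ≤ m) (t : ℝ) :
    t ≤ orderStat u k ↔ (Finset.univ.filter (fun j => u j < t)).card < k := by
  set s := List.insertionSort (· ≤ ·) (List.ofFn u) with hsdef
  have hlen : s.length = m := by simp [hsdef]
  have hk' : k - 1 < s.length := by omega
  have hget : orderStat u k = s.get ⟨k - 1, hk'⟩ := by
    rw [orderStat, List.getD_eq_getElem (hn := hk'), List.get_eq_getElem]
  have key := sortedCount (fun x => decide (x < t))
    (by intro a b hab hb; simp only [decide_eq_true_eq] at hb ⊢; linarith)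
    s (List.pairwise_insertionSort _ _) (k - 1) hk'
  simp only [decide_eq_true_eq] at key
  rw [cardFilter (fun x => x < t) u,
    ← (List.perm_insertionSort (· ≤ ·) (List.ofFn u)).countP_eq, ← hsdef, hget, ← not_lt, key]
  omega

theorem count_ge {m : ℕ} (u : Fin m → ℝ) {k : ℕ} (hk1 : 1 ≤ k) (hkm : k ≤ m) :
    k ≤ (Finset.univ.filter (fun j => u j ≤ orderStat u k)).card := by
  set t := orderStat u k with ht
  set s := List.insertionSort (· ≤ ·) (List.ofFn u) with hsdef
  have hlen : s.length = m := by simp [hsdef]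
  have hk' : k - 1 < s.length := by omega
  have hget : t = s.get ⟨k - 1, hk'⟩ := by
    rw [ht, orderStat, List.getD_eq_getElem (hn := hk'), List.get_eq_getElem]
  have key := sortedCount (fun x => decide (x ≤ t))
    (by intro a b hab hb; simp only [decide_eq_true_eq] at hb ⊢; linarith)
    s (List.pairwise_insertionSort _ _) (k - 1) hk'
  simp only [decide_eq_true_eq] at key
  have : k - 1 < s.countP (fun x => decide (x ≤ t)) := key.mp (le_of_eq hget.symm)
  rw [cardFilter (fun x => x ≤ t) u,
    ← (List.perm_insertionSort (· ≤ ·) (List.ofFn u)).countP_eq, ← hsdef]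
  omega

theorem stmt_0 {Ω : Type*} [MeasurableSpace Ω] (P : Measure Ω) [IsProbabilityMeasure P]
    (n : ℕ) (U : Ω → Fin (n + 1) → ℝ) (hU : Measurable U)
    (hexch : ∀ σ : Equiv.Perm (Fin (n + 1)),
      Measure.map (fun ω => U ω ∘ σ) P = Measure.map U P)
    (β : ℝ) (hβ : β ∈ Set.Ioo (0 : ℝ) 1) :
    ENNReal.ofReal β ≤
      P {ω | U ω (Fin.last n) ≤ orderStat (U ω) ⌈β * (n + 1)⌉₊} := by
  obtain ⟨hβ0, hβ1⟩ := hβ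
  set k := ⌈β * (n + 1)⌉₊ with hk
  have hk1 : 1 ≤ k := Nat.ceil_pos.mpr (by positivity)
  have hkm : k ≤ n + 1 := by
    rw [hk]
    refine Nat.ceil_le.mpr ?_
    push_cast
    nlinarith [Nat.cast_nonneg (α := ℝ) n]
  set E : Fin (n + 1) → Set (Fin (n + 1) → ℝ) := fun i =>
    {u | (Finset.univ.filter (fun j => u j < u i)).card < k} with hE
  have hEmeas : ∀ i, MeasurableSet (E i) := by
    intro i
    have hmeas : Measurable fun u : Fin (n + 1) → ℝ =>
        (Finset.univ.filter (fun j => u j < u i)).card := by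
      simp_rw [Finset.card_filter]
      apply Finset.measurable_sum
      intro j _
      exact Measurable.ite (measurableSet_lt (measurable_pi_apply j) (measurable_pi_apply i))
        measurable_const measurable_const
    exact hmeas (by trivial : MeasurableSet {c : ℕ | c < k})
  have hEiff : ∀ (u : Fin (n + 1) → ℝ) (i), u ∈ E i ↔ u i ≤ orderStat u k := by
    intro u i
    exact (le_orderStat_iff u hk1 hkm (u i)).symm
  have hset : {ω | U ω (Fin.last n) ≤ orderStat (U ω) k} = U ⁻¹' (E (Fin.last n)) := by
    ext ω
    exact (hEiff (U ω) (Fin.last n)).symm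
  have hPeq : ∀ i, P (U ⁻¹' E i) = P (U ⁻¹' E (Fin.last n)) := by
    intro i
    set σ := Equiv.swap i (Fin.last n) with hσ
    have hmapσ : Measurable (fun ω => U ω ∘ σ) := by
      exact (measurable_pi_lambda _ (fun j => measurable_pi_apply (σ j))).comp hU
    have hkey : ∀ u : Fin (n + 1) → ℝ, (u ∘ σ) ∈ E (Fin.last n) ↔ u ∈ E i := by
      intro u
      rw [hEiff, hEiff, orderStat_comp]
      have : (u ∘ σ) (Fin.last n) = u i := by
        simp [hσ, Equiv.swap_apply_right]
      rw [this]
    calc P (U ⁻¹' E i) = P ((fun ω => U ω ∘ σ) ⁻¹' E (Fin.last n)) := by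
          congr 1
          ext ω
          exact (hkey (U ω)).symm
      _ = Measure.map (fun ω => U ω ∘ σ) P (E (Fin.last n)) :=
          (Measure.map_apply hmapσ (hEmeas _)).symm
      _ = Measure.map U P (E (Fin.last n)) := by rw [hexch σ]
      _ = P (U ⁻¹' E (Fin.last n)) := Measure.map_apply hU (hEmeas _)
  -- pointwise counting
  have hpt : ∀ ω, (k : ℝ≥0∞) ≤ ∑ i, (U ⁻¹' E i).indicator (fun _ => (1 : ℝ≥0∞)) ω := by
    intro ω
    have hcount := count_ge (U ω) hk1 hkm
    calc (k : ℝ≥0∞)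
        ≤ ((Finset.univ.filter (fun i => U ω i ≤ orderStat (U ω) k)).card : ℝ≥0∞) := by
          exact_mod_cast hcount
      _ = ∑ i, (U ⁻¹' E i).indicator (fun _ => (1 : ℝ≥0∞)) ω := by
          rw [Finset.card_filter]
          push_cast
          apply Finset.sum_congr rfl
          intro i _
          have : ω ∈ U ⁻¹' E i ↔ U ω i ≤ orderStat (U ω) k := hEiff (U ω) i
          by_cases h : U ω i ≤ orderStat (U ω) k
          · rw [Set.indicator_of_mem (this.mpr h), if_pos h]
          · rw [Set.indicator_of_notMem (fun hc => h (this.mp hc)), if_neg h]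
  have hsum : (k : ℝ≥0∞) ≤ ∑ i, P (U ⁻¹' E i) := by
    have h1 : (k : ℝ≥0∞) = ∫⁻ _, (k : ℝ≥0∞) ∂P := by
      rw [lintegral_const, measure_univ, mul_one]
    rw [h1]
    calc ∫⁻ _, (k : ℝ≥0∞) ∂P
        ≤ ∫⁻ ω, ∑ i, (U ⁻¹' E i).indicator (fun _ => (1 : ℝ≥0∞)) ω ∂P :=
          lintegral_mono hpt
      _ = ∑ i, ∫⁻ ω, (U ⁻¹' E i).indicator (fun _ => (1 : ℝ≥0∞)) ω ∂P := by
          apply lintegral_finset_sum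
          intro i _
          exact measurable_const.indicator (hU (hEmeas i))
      _ = ∑ i, P (U ⁻¹' E i) := by
          apply Finset.sum_congr rfl
          intro i _
          rw [lintegral_indicator_const (hU (hEmeas i)), one_mul]
  have hconst : ∑ i, P (U ⁻¹' E i) = (n + 1 : ℝ≥0∞) * P (U ⁻¹' E (Fin.last n)) := by
    rw [Finset.sum_congr rfl (fun i _ => hPeq i)]
    simp [Finset.card_univ, mul_comm]
  rw [hset]
  have hmain : (k : ℝ≥0∞) ≤ (n + 1 : ℝ≥0∞) * P (U ⁻¹' E (Fin.last n)) := by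
    rw [← hconst]; exact hsum
  have hβk : ENNReal.ofReal β * (n + 1 : ℝ≥0∞) ≤ (k : ℝ≥0∞) := by
    have h1 : β * (n + 1) ≤ (k : ℝ) := Nat.le_ceil _
    calc ENNReal.ofReal β * (n + 1 : ℝ≥0∞)
        = ENNReal.ofReal (β * (n + 1)) := by
          rw [ENNReal.ofReal_mul hβ0.le]
          congr 1
          rw [ENNReal.ofReal_add (Nat.cast_nonneg n) zero_le_one, ENNReal.ofReal_natCast,
            ENNReal.ofReal_one]
      _ ≤ ENNReal.ofReal (k : ℝ) := ENNReal.ofReal_le_ofReal h1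
      _ = (k : ℝ≥0∞) := ENNReal.ofReal_natCast k
  have hne0 : (n + 1 : ℝ≥0∞) ≠ 0 := by simp
  have hnetop : (n + 1 : ℝ≥0∞) ≠ ⊤ := by simp
  have := hβk.trans hmain
  rw [mul_comm (ENNReal.ofReal β) _] at this
  exact (ENNReal.mul_le_mul_iff_right hne0 hnetop).mp this
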